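/- Every forward continuous function f from (ℝ, d_l), where d_l is the lower quasi-metric on ℝ, to (ℝ,|·|) is constant. Consequently (ℝ, d_l) is a UC quasi-metric space. -/
import Mathlib


open Filter Topology Set

structure IsQuasiMetric {X : Type*} (d : X → X → ℝ) : Prop where
  nonneg : ∀ x y, 0 ≤ d x y
  refl : ∀ x, d x x = 0
  eq_of_both_zero : ∀ x y, d x y = 0 → d y x = 0 → x = y
  triangle : ∀ x y z, d x y ≤ d x z + d z y

/-- The forward topology generated by forward balls `B⁺(x,ε) = {y | d x y < ε}`. -/
def forwardTopology {X : Type*} (d : X → X → ℝ) : TopologicalSpace X :=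
  TopologicalSpace.generateFrom {S | ∃ x : X, ∃ ε : ℝ, 0 < ε ∧ S = {y | d x y < ε}}

/-- `s` forward converges to `x`: `d x (s n) → 0`. -/
def ForwardConv {X : Type*} (d : X → X → ℝ) (s : ℕ → X) (x : X) : Prop :=
  ∀ ε > (0:ℝ), ∃ N : ℕ, ∀ n ≥ N, d x (s n) < ε

/-- `s` backward converges to `x`: `d (s n) x → 0`. -/
def BackwardConv {X : Type*} (d : X → X → ℝ) (s : ℕ → X) (x : X) : Prop :=
  ∀ ε > (0:ℝ), ∃ N : ℕ, ∀ n ≥ N, d (s n) x < ε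

/-- `x` is a cluster point of `s`: some subsequence forward converges to `x`. -/
def IsClusterPointOf {X : Type*} (d : X → X → ℝ) (s : ℕ → X) (x : X) : Prop :=
  ∃ φ : ℕ → ℕ, StrictMono φ ∧ ForwardConv d (s ∘ φ) x

def LeftKCauchy {X : Type*} (d : X → X → ℝ) (s : ℕ → X) : Prop :=
  ∀ ε > (0:ℝ), ∃ n₀ : ℕ, ∀ k n : ℕ, n₀ ≤ k → k ≤ n → d (s k) (s n) < ε

/-- `s` is forward parallel to `t`. -/
def ForwardParallel {X : Type*} (d : X → X → ℝ) (s t : ℕ → X) : Prop :=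
  ∀ ε > (0:ℝ), ∃ N : ℕ, ∀ n ≥ N, d (s n) (t n) < ε

/-- Forward continuity for real-valued functions (ε-δ form). -/
def ForwardContinuous {X : Type*} (d : X → X → ℝ) (f : X → ℝ) : Prop :=
  ∀ x₀ : X, ∀ ε > (0:ℝ), ∃ δ > (0:ℝ), ∀ y, d x₀ y < δ → |f x₀ - f y| < ε

/-- Uniform continuity for real-valued functions. -/
def UniformlyCont {X : Type*} (d : X → X → ℝ) (f : X → ℝ) : Prop :=
  ∀ ε > (0:ℝ), ∃ δ > (0:ℝ), ∀ x y, d x y < δ → |f x - f y| < ε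

/-- `(X,d)` is a UC quasi-metric space. -/
def IsUC {X : Type*} (d : X → X → ℝ) : Prop :=
  ∀ f : X → ℝ, ForwardContinuous d f → UniformlyCont d f

/-- Distance between two sets: `inf {d a b | a ∈ A, b ∈ B}`. -/
noncomputable def setDist {X : Type*} (d : X → X → ℝ) (A B : Set X) : ℝ :=
  sInf {r : ℝ | ∃ a ∈ A, ∃ b ∈ B, d a b = r}

/-- The lower quasi-metric on ℝ. -/
noncomputable def lowerQuasiMetric : ℝ → ℝ → ℝ :=
  fun x y => if y ≤ x then x - y else 0

/-- every forward continuous function on `(ℝ, d_l)` is constant; consequently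
`(ℝ, d_l)` is a UC quasi-metric space. -/
theorem lowerQuasiMetric_isUC :
    (∀ f : ℝ → ℝ, ForwardContinuous lowerQuasiMetric f → ∀ a b : ℝ, f a = f b) ∧
      IsUC lowerQuasiMetric := by
  have key : ∀ f : ℝ → ℝ, ForwardContinuous lowerQuasiMetric f → ∀ a b : ℝ, f a = f b := by
    intro f hf a b
    have h : ∀ ε > (0:ℝ), |f a - f b| < 2 * ε := by
      intro ε hε
      obtain ⟨δa, hδa, ha⟩ := hf a ε hε
      obtain ⟨δb, hδb, hb⟩ := hf b ε hε
      set c := max a b + 1 with hc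
      have hca : lowerQuasiMetric a c = 0 := by
        simp only [lowerQuasiMetric]
        rw [if_neg]
        push_neg
        have := le_max_left a b
        linarith
      have hcb : lowerQuasiMetric b c = 0 := by
        simp only [lowerQuasiMetric]
        rw [if_neg]
        push_neg
        have := le_max_right a b
        linarith
      have h1 := ha c (by rw [hca]; exact hδa)
      have h2 := hb c (by rw [hcb]; exact hδb)
      calc |f a - f b| ≤ |f a - f c| + |f c - f b| := abs_sub_le _ _ _
        _ < ε + ε := by rw [abs_sub_comm (f c)]; linarith
        _ = 2 * ε := by ring
    by_contra hne
    have hpos : 0 < |f a - f b| := by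
      rw [abs_pos]
      intro h0
      exact hne (by linarith [abs_nonneg (f a - f b), sub_eq_zero.mp h0])
    have := h (|f a - f b| / 2) (by linarith)
    linarith
  refine ⟨key, fun f hf ε hε => ⟨1, one_pos, fun x y _ => ?_⟩⟩
  rw [key f hf x y, sub_self, abs_zero]
  exact hε
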